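/- The complete bipartite graph K_{7,7} contains no subgraph isomorphic to K_{2,2}^{3,3}, and it contains exactly 42 copies of K_{2,7}; consequently ex(14, K_{2,7}, K_{2,2}^{3,3}) ≥ 42. -/

import Mathlib

open SimpleGraph Finset

/-- `G` contains a copy of `F`, i.e. `G` has a subgraph isomorphic to `F`. -/
def ContainsCopy {α β : Type*} (F : SimpleGraph α) (G : SimpleGraph β) : Prop :=
  ∃ f : α → β, Function.Injective f ∧ ∀ ⦃a b⦄, F.Adj a b → G.Adj (f a) (f b)

/-- `G` is `F`-free: it contains no subgraph isomorphic to `F`. -/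
def IsFFree {α β : Type*} (F : SimpleGraph α) (G : SimpleGraph β) : Prop :=
  ¬ ContainsCopy F G

/-- `𝒩(H,G)`: the number of subgraphs of `G` isomorphic to `H`. -/
noncomputable def copyCount {α β : Type*} (H : SimpleGraph α) (G : SimpleGraph β) : ℕ :=
  Nat.card {G' : G.Subgraph // Nonempty (G'.coe ≃g H)}

/-- The number of embeddings of `H` into `G` (injective, edge-preserving maps). -/
noncomputable def embCount {α β : Type*} (H : SimpleGraph α) (G : SimpleGraph β) : ℕ :=
  Nat.card {f : α → β // Function.Injective f ∧ ∀ ⦃a b⦄, H.Adj a b → G.Adj (f a) (f b)}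

/-- `ex(n,H,F)`: the maximum number of copies of `H` in an `F`-free graph on `n` vertices. -/
noncomputable def exNum {α β : Type*} (n : ℕ) (H : SimpleGraph α) (F : SimpleGraph β) : ℕ :=
  sSup {k | ∃ G : SimpleGraph (Fin n), IsFFree F G ∧ copyCount H G = k}

/-- The defining relation of `K_{2,r}^{p,q}`: the two vertices `u = inl 0`, `v = inl 1` of the
small side, `r` vertices joined to both, `p` vertices joined only to `u`, `q` vertices joined
only to `v`. -/
def K2rpqRel (p q r : ℕ) :
    (Fin 2 ⊕ (Fin r ⊕ Fin p ⊕ Fin q)) → (Fin 2 ⊕ (Fin r ⊕ Fin p ⊕ Fin q)) → Prop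
  | Sum.inl _, Sum.inr (Sum.inl _) => True
  | Sum.inl i, Sum.inr (Sum.inr (Sum.inl _)) => i = 0
  | Sum.inl i, Sum.inr (Sum.inr (Sum.inr _)) => i = 1
  | _, _ => False

/-- The graph `K_{2,r}^{p,q}` obtained from `K_{2,r}` by adding `p` pendant vertices at `u`
and `q` pendant vertices at `v`, where `u,v` form the side of size 2. -/
def K2rpq (p q r : ℕ) : SimpleGraph (Fin 2 ⊕ (Fin r ⊕ Fin p ⊕ Fin q)) :=
  SimpleGraph.fromRel (K2rpqRel p q r)

/-- The final set `B` of the greedy partition process: start with `B` the set of vertices of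
degree `≠ 2`, and repeatedly move to `A` any non-leaf vertex of `B` with at most two neighbors
in `B`.  The result is the largest subset `S` of the initial `B` in which every non-leaf vertex
has at least three neighbors inside `S`. -/
def finalB {V : Type*} [Fintype V] (T : SimpleGraph V) [DecidableRel T.Adj] : Set V :=
  {v | ∃ S : Set V, v ∈ S ∧ (∀ u ∈ S, T.degree u ≠ 2) ∧
    (∀ u ∈ S, T.degree u ≠ 1 → 3 ≤ Nat.card {w : V // w ∈ S ∧ T.Adj u w})}

/-- A tree is nice if it has at least 3 vertices and every vertex of the final set `B` is a
leaf. -/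
def IsNice {V : Type*} [Fintype V] (T : SimpleGraph V) [DecidableRel T.Adj] : Prop :=
  3 ≤ Fintype.card V ∧ ∀ v ∈ finalB T, T.degree v = 1

/-- The graph on `Fin n` consisting of `⌊n/m⌋` pairwise disjoint copies of `K_m`
(on consecutive blocks of `m` vertices) together with `n - m⌊n/m⌋` isolated vertices. -/
def cliqueBlocks (n m : ℕ) : SimpleGraph (Fin n) :=
  SimpleGraph.fromRel (fun a b =>
    (a : ℕ) / m = (b : ℕ) / m ∧ (a : ℕ) < m * (n / m) ∧ (b : ℕ) < m * (n / m))


section Stmt16Aux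
open Function Set

variable {β γ : Type*} {G : SimpleGraph β} {G2 : SimpleGraph γ}

lemma subgraph_map_map (ψ : G ≃g G2) (A : G.Subgraph) :
    (A.map ψ.toHom).map ψ.symm.toHom = A := by
  rw [← SimpleGraph.Subgraph.map_comp]
  have : (ψ.symm.toHom.comp ψ.toHom) = SimpleGraph.Hom.id := by
    ext x
    exact ψ.symm_apply_apply x
  rw [this, SimpleGraph.Subgraph.map_id]

/-- equiv of subgraph lattices along an iso -/
noncomputable def subgraphEquiv (ψ : G ≃g G2) : G.Subgraph ≃ G2.Subgraph where
  toFun := SimpleGraph.Subgraph.map ψ.toHom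
  invFun := SimpleGraph.Subgraph.map ψ.symm.toHom
  left_inv := subgraph_map_map ψ
  right_inv A := by
    have := subgraph_map_map ψ.symm A
    simpa using this

/-- coe iso for mapped subgraph -/
noncomputable def subgraphMapCoeIso (ψ : G ≃g G2) (A : G.Subgraph) :
    A.coe ≃g (A.map ψ.toHom).coe where
  toEquiv := (ψ.toEquiv.image A.verts).trans (Equiv.setCongr (by rfl))
  map_rel_iff' := by
    rintro ⟨x, hx⟩ ⟨y, hy⟩
    show (A.map ψ.toHom).Adj (ψ x) (ψ y) ↔ A.Adj x y
    constructor
    · rintro ⟨u, v, h, hu, hv⟩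
      rw [show u = x from ψ.toEquiv.injective hu, show v = y from ψ.toEquiv.injective hv] at h
      exact h
    · intro h
      exact ⟨x, y, h, rfl, rfl⟩

lemma copyCount_iso {α : Type*} (H : SimpleGraph α) (ψ : G ≃g G2) :
    copyCount H G = copyCount H G2 := by
  apply Nat.card_congr
  refine Equiv.subtypeEquiv (subgraphEquiv ψ) fun A => ⟨fun ⟨e⟩ => ⟨?_⟩, fun ⟨e⟩ => ⟨?_⟩⟩
  · exact e.comp (subgraphMapCoeIso ψ A).symm
  · exact (e.comp (subgraphMapCoeIso ψ A) : _)


noncomputable def genSplit {α β γ : Type*} {j1 : α → γ} {j2 : β → γ}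
    (hinj1 : Injective j1) (hinj2 : Injective j2)
    (hne : ∀ a b, j1 a ≠ j2 b)
    (hj : ∀ x, (∃ a, x = j1 a) ∨ (∃ b, x = j2 b))
    (s : Set γ) :
    ↥s ≃ (↥{a | j1 a ∈ s} ⊕ ↥{b | j2 b ∈ s}) := by
  refine (Equiv.ofBijective (fun y : ↥{a | j1 a ∈ s} ⊕ ↥{b | j2 b ∈ s} =>
    Sum.elim (fun a => (⟨j1 a.1, a.2⟩ : ↥s)) (fun b => (⟨j2 b.1, b.2⟩ : ↥s)) y) ⟨?_, ?_⟩).symm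
  · rintro (⟨a, ha⟩ | ⟨b, hb⟩) (⟨a', ha'⟩ | ⟨b', hb'⟩) h <;>
      simp only [Sum.elim_inl, Sum.elim_inr, Subtype.mk.injEq] at h
    · simp [hinj1 h]
    · exact absurd h (hne _ _)
    · exact absurd h.symm (hne _ _)
    · simp [hinj2 h]
  · rintro ⟨x, hx⟩
    rcases hj x with ⟨a, rfl⟩ | ⟨b, rfl⟩
    · exact ⟨Sum.inl ⟨a, hx⟩, rfl⟩
    · exact ⟨Sum.inr ⟨b, hx⟩, rfl⟩

lemma genSplit_apply_j1 {α β γ : Type*} {j1 : α → γ} {j2 : β → γ}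
    (hinj1 : Injective j1) (hinj2 : Injective j2)
    (hne : ∀ a b, j1 a ≠ j2 b)
    (hj : ∀ x, (∃ a, x = j1 a) ∨ (∃ b, x = j2 b))
    (s : Set γ) (a : α) (h : j1 a ∈ s) :
    genSplit hinj1 hinj2 hne hj s ⟨j1 a, h⟩ = Sum.inl ⟨a, h⟩ := by
  rw [genSplit, Equiv.symm_apply_eq]; rfl

lemma genSplit_apply_j2 {α β γ : Type*} {j1 : α → γ} {j2 : β → γ}
    (hinj1 : Injective j1) (hinj2 : Injective j2)
    (hne : ∀ a b, j1 a ≠ j2 b)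
    (hj : ∀ x, (∃ a, x = j1 a) ∨ (∃ b, x = j2 b))
    (s : Set γ) (b : β) (h : j2 b ∈ s) :
    genSplit hinj1 hinj2 hne hj s ⟨j2 b, h⟩ = Sum.inr ⟨b, h⟩ := by
  rw [genSplit, Equiv.symm_apply_eq]; rfl

abbrev V77 : Type := Fin 7 ⊕ Fin 7
abbrev G7 : SimpleGraph V77 := completeBipartiteGraph (Fin 7) (Fin 7)
abbrev H27 : SimpleGraph (Fin 2 ⊕ Fin 7) := completeBipartiteGraph (Fin 2) (Fin 7)

lemma G7_adj (x y : V77) : G7.Adj x y ↔ (x.isLeft ∧ y.isRight ∨ x.isRight ∧ y.isLeft) := Iff.rfl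

def bset : Bool → Finset (Fin 7) → Set V77
  | true, s => Sum.inl '' ↑s ∪ Set.range Sum.inr
  | false, s => Set.range Sum.inl ∪ Sum.inr '' ↑s

lemma mem_bset_true_inl (s : Finset (Fin 7)) (a : Fin 7) :
    Sum.inl a ∈ bset true s ↔ a ∈ s := by simp [bset]

lemma mem_bset_true_inr (s : Finset (Fin 7)) (b : Fin 7) :
    Sum.inr b ∈ bset true s := by simp [bset]

lemma mem_bset_false_inr (s : Finset (Fin 7)) (a : Fin 7) :
    Sum.inr a ∈ bset false s ↔ a ∈ s := by simp [bset]

lemma mem_bset_false_inl (s : Finset (Fin 7)) (b : Fin 7) :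
    Sum.inl b ∈ bset false s := by simp [bset]

def sb (b : Bool) (s : Finset (Fin 7)) : G7.Subgraph :=
  (⊤ : G7.Subgraph).induce (bset b s)

lemma sb_verts (b : Bool) (s : Finset (Fin 7)) : (sb b s).verts = bset b s := rfl

lemma sb_adj (b : Bool) (s : Finset (Fin 7)) (x y : V77) :
    (sb b s).Adj x y ↔ x ∈ bset b s ∧ y ∈ bset b s ∧ G7.Adj x y := by
  simp [sb, SimpleGraph.Subgraph.induce_adj]

lemma sb_injective : ∀ b b' s s', s.card = 2 → s'.card = 2 → sb b s = sb b' s' → b = b' ∧ s = s' := by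
  have hv : ∀ b s b' s', sb b s = sb b' s' → bset b s = bset b' s' := by
    intro b s b' s' h
    rw [← sb_verts, ← sb_verts, h]
  rintro (_|_) (_|_) s s' hs hs' h <;> have hv' := hv _ _ _ _ h
  · refine ⟨rfl, ?_⟩
    ext a
    rw [← mem_bset_false_inr s a, ← mem_bset_false_inr s' a, hv']
  · exfalso
    have h1 : ∀ a : Fin 7, a ∈ s' := by
      intro a
      rw [← mem_bset_true_inl s' a, ← hv']
      exact mem_bset_false_inl s a
    rw [Finset.eq_univ_iff_forall.2 h1] at hs'
    simp at hs'
  · exfalso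
    have h1 : ∀ a : Fin 7, a ∈ s := by
      intro a
      rw [← mem_bset_true_inl s a, hv']
      exact mem_bset_false_inl s' a
    rw [Finset.eq_univ_iff_forall.2 h1] at hs
    simp at hs
  · refine ⟨rfl, ?_⟩
    ext a
    rw [← mem_bset_true_inl s a, ← mem_bset_true_inl s' a, hv']

lemma inl_inj7 : Injective (Sum.inl : Fin 7 → V77) := Sum.inl_injective
lemma inr_inj7 : Injective (Sum.inr : Fin 7 → V77) := Sum.inr_injective
lemma inl_ne_inr7 : ∀ a b : Fin 7, (Sum.inl a : V77) ≠ Sum.inr b := by simp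
lemma inr_ne_inl7 : ∀ a b : Fin 7, (Sum.inr a : V77) ≠ Sum.inl b := by simp
lemma cover_lr : ∀ x : V77, (∃ a, x = Sum.inl a) ∨ (∃ b, x = Sum.inr b) := by
  rintro (a | b)
  · exact Or.inl ⟨a, rfl⟩
  · exact Or.inr ⟨b, rfl⟩
lemma cover_rl : ∀ x : V77, (∃ a, x = Sum.inr a) ∨ (∃ b, x = Sum.inl b) := by
  rintro (a | b)
  · exact Or.inr ⟨a, rfl⟩
  · exact Or.inl ⟨b, rfl⟩

noncomputable def sbIsoTrue (s : Finset (Fin 7)) (hs : s.card = 2) : (sb true s).coe ≃g H27 := by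
  have e1 : ↥{a | Sum.inl a ∈ (sb true s).verts} ≃ Fin 2 :=
    (Equiv.subtypeEquivRight (fun a => mem_bset_true_inl s a)).trans (Finset.equivFinOfCardEq hs)
  have e2 : ↥{b | Sum.inr b ∈ (sb true s).verts} ≃ Fin 7 :=
    Equiv.subtypeUnivEquiv (fun b => mem_bset_true_inr s b)
  refine ⟨(genSplit inl_inj7 inr_inj7 inl_ne_inr7 cover_lr ((sb true s).verts)).trans
    (Equiv.sumCongr e1 e2), ?_⟩
  rintro ⟨x | x, hx⟩ ⟨y | y, hy⟩ <;>
    rw [Equiv.trans_apply, Equiv.trans_apply] <;>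
    [rw [genSplit_apply_j1 inl_inj7 inr_inj7 inl_ne_inr7 cover_lr ((sb true s).verts) x hx,
        genSplit_apply_j1 inl_inj7 inr_inj7 inl_ne_inr7 cover_lr ((sb true s).verts) y hy];
     rw [genSplit_apply_j1 inl_inj7 inr_inj7 inl_ne_inr7 cover_lr ((sb true s).verts) x hx,
        genSplit_apply_j2 inl_inj7 inr_inj7 inl_ne_inr7 cover_lr ((sb true s).verts) y hy];
     rw [genSplit_apply_j2 inl_inj7 inr_inj7 inl_ne_inr7 cover_lr ((sb true s).verts) x hx,
        genSplit_apply_j1 inl_inj7 inr_inj7 inl_ne_inr7 cover_lr ((sb true s).verts) y hy];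
     rw [genSplit_apply_j2 inl_inj7 inr_inj7 inl_ne_inr7 cover_lr ((sb true s).verts) x hx,
        genSplit_apply_j2 inl_inj7 inr_inj7 inl_ne_inr7 cover_lr ((sb true s).verts) y hy]] <;>
    simp only [Equiv.sumCongr_apply, Sum.map_inl, Sum.map_inr, SimpleGraph.Subgraph.coe_adj,
      sb_adj, completeBipartiteGraph_adj, Sum.isLeft_inl, Sum.isRight_inr, Sum.isLeft_inr,
      Sum.isRight_inl] <;> simp [hx, hy] <;> exact ⟨hx, hy⟩

noncomputable def sbIsoFalse (s : Finset (Fin 7)) (hs : s.card = 2) : (sb false s).coe ≃g H27 := by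
  have e1 : ↥{a | Sum.inr a ∈ (sb false s).verts} ≃ Fin 2 :=
    (Equiv.subtypeEquivRight (fun a => mem_bset_false_inr s a)).trans (Finset.equivFinOfCardEq hs)
  have e2 : ↥{b | Sum.inl b ∈ (sb false s).verts} ≃ Fin 7 :=
    Equiv.subtypeUnivEquiv (fun b => mem_bset_false_inl s b)
  refine ⟨(genSplit inr_inj7 inl_inj7 inr_ne_inl7 cover_rl ((sb false s).verts)).trans
    (Equiv.sumCongr e1 e2), ?_⟩
  rintro ⟨x | x, hx⟩ ⟨y | y, hy⟩ <;>
    rw [Equiv.trans_apply, Equiv.trans_apply] <;>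
    [rw [genSplit_apply_j2 inr_inj7 inl_inj7 inr_ne_inl7 cover_rl ((sb false s).verts) x hx,
        genSplit_apply_j2 inr_inj7 inl_inj7 inr_ne_inl7 cover_rl ((sb false s).verts) y hy];
     rw [genSplit_apply_j2 inr_inj7 inl_inj7 inr_ne_inl7 cover_rl ((sb false s).verts) x hx,
        genSplit_apply_j1 inr_inj7 inl_inj7 inr_ne_inl7 cover_rl ((sb false s).verts) y hy];
     rw [genSplit_apply_j1 inr_inj7 inl_inj7 inr_ne_inl7 cover_rl ((sb false s).verts) x hx,
        genSplit_apply_j2 inr_inj7 inl_inj7 inr_ne_inl7 cover_rl ((sb false s).verts) y hy];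
     rw [genSplit_apply_j1 inr_inj7 inl_inj7 inr_ne_inl7 cover_rl ((sb false s).verts) x hx,
        genSplit_apply_j1 inr_inj7 inl_inj7 inr_ne_inl7 cover_rl ((sb false s).verts) y hy]] <;>
    simp only [Equiv.sumCongr_apply, Sum.map_inl, Sum.map_inr, SimpleGraph.Subgraph.coe_adj,
      sb_adj, completeBipartiteGraph_adj, Sum.isLeft_inl, Sum.isRight_inr, Sum.isLeft_inr,
      Sum.isRight_inl] <;> simp [hx, hy] <;> exact ⟨hx, hy⟩

noncomputable def sbIso (b : Bool) (s : Finset (Fin 7)) (hs : s.card = 2) :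
    (sb b s).coe ≃g H27 := by
  cases b
  · exact sbIsoFalse s hs
  · exact sbIsoTrue s hs

lemma H27_nbr_card (x : Fin 2 ⊕ Fin 7) :
    Nat.card (H27.neighborSet x) = if x.isLeft then 7 else 2 := by
  rcases x with i | j
  · have h : H27.neighborSet (Sum.inl i) = Set.range (Sum.inr : Fin 7 → Fin 2 ⊕ Fin 7) := by
      ext y; rcases y with a | b <;> simp [SimpleGraph.neighborSet]
    rw [h, Nat.card_range_of_injective Sum.inr_injective]
    simp [Nat.card_eq_fintype_card]
  · have h : H27.neighborSet (Sum.inr j) = Set.range (Sum.inl : Fin 2 → Fin 2 ⊕ Fin 7) := by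
      ext y; rcases y with a | b <;> simp [SimpleGraph.neighborSet]
    rw [h, Nat.card_range_of_injective Sum.inl_injective]
    simp [Nat.card_eq_fintype_card]

lemma pair_other {α : Type*} [DecidableEq α] {a1 a2 x y : α}
    (hx : x ∈ ({a1, a2} : Set α)) (hy : y ∈ ({a1, a2} : Set α)) (hxy : y ≠ x) :
    y = if x = a1 then a2 else a1 := by
  rcases hx with rfl | rfl <;> rcases hy with rfl | rfl <;> simp_all

lemma aux (G' : G7.Subgraph) (e : G'.coe ≃g H27)
    {j1 j2 : Fin 7 → V77}
    (hinj1 : Injective j1) (hinj2 : Injective j2)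
    (hne : ∀ a b, j1 a ≠ j2 b)
    (hj : ∀ x, (∃ a, x = j1 a) ∨ (∃ b, x = j2 b))
    (hnadj1 : ∀ a b, ¬ G7.Adj (j1 a) (j1 b))
    (hnadj2 : ∀ a b, ¬ G7.Adj (j2 a) (j2 b))
    (h1 : ∃ a, ((e.symm (Sum.inl 0) : ↥G'.verts) : V77) = j1 a) :
    ∃ a1 a2 : Fin 7, a1 ≠ a2 ∧
      G' = (⊤ : G7.Subgraph).induce (j1 '' {a1, a2} ∪ Set.range j2) := by
  classical
  set L : Set (Fin 7) := {a | j1 a ∈ G'.verts} with hLdef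
  set R : Set (Fin 7) := {b | j2 b ∈ G'.verts} with hRdef
  have hsplit : Nat.card (↥G'.verts) = Nat.card ↥L + Nat.card ↥R := by
    rw [Nat.card_congr (genSplit hinj1 hinj2 hne hj G'.verts), Nat.card_sum]
  have hnine : Nat.card (↥G'.verts) = 9 := by
    rw [Nat.card_congr e.toEquiv, Nat.card_sum]
    simp [Nat.card_eq_fintype_card]
  have hL7 : Nat.card ↥L ≤ 7 := by
    have := Nat.card_le_card_of_injective (Subtype.val : ↥L → Fin 7) Subtype.val_injective
    simpa [Nat.card_eq_fintype_card] using this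
  have hR7 : Nat.card ↥R ≤ 7 := by
    have := Nat.card_le_card_of_injective (Subtype.val : ↥R → Fin 7) Subtype.val_injective
    simpa [Nat.card_eq_fintype_card] using this
  have hdeg : ∀ w : ↥G'.verts,
      Nat.card (G'.coe.neighborSet w) = if (e w).isLeft then 7 else 2 := by
    intro w
    rw [Nat.card_congr (e.mapNeighborSet w)]
    exact H27_nbr_card (e w)
  have nbr1 : ∀ (w : ↥G'.verts) (a : Fin 7), (w : V77) = j1 a →
      ∀ z : ↥G'.verts, G'.coe.Adj w z → ∃ b, (z : V77) = j2 b ∧ b ∈ R := by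
    intro w a hw z hz
    have hadj7 : G7.Adj (j1 a) (z : V77) := by
      have h := G'.adj_sub hz
      rwa [hw] at h
    rcases hj (z : V77) with ⟨a', ha'⟩ | ⟨b, hb⟩
    · rw [ha'] at hadj7; exact absurd hadj7 (hnadj1 _ _)
    · refine ⟨b, hb, ?_⟩
      show j2 b ∈ G'.verts
      rw [← hb]; exact z.2
  have nbr2 : ∀ (w : ↥G'.verts) (b : Fin 7), (w : V77) = j2 b →
      ∀ z : ↥G'.verts, G'.coe.Adj w z → ∃ a, (z : V77) = j1 a ∧ a ∈ L := by
    intro w b hw z hz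
    have hadj7 : G7.Adj (j2 b) (z : V77) := by
      have h := G'.adj_sub hz
      rwa [hw] at h
    rcases hj (z : V77) with ⟨a, ha⟩ | ⟨b', hb'⟩
    · refine ⟨a, ha, ?_⟩
      show j1 a ∈ G'.verts
      rw [← ha]; exact z.2
    · rw [hb'] at hadj7; exact absurd hadj7 (hnadj2 _ _)
  have cardnbr1 : ∀ (w : ↥G'.verts) (a : Fin 7), (w : V77) = j1 a →
      Nat.card (G'.coe.neighborSet w) ≤ Nat.card ↥R := by
    intro w a hw
    have hf : ∀ z : ↥(G'.coe.neighborSet w), ∃ b, ((z : ↥G'.verts) : V77) = j2 b ∧ b ∈ R :=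
      fun z => nbr1 w a hw z z.2
    apply Nat.card_le_card_of_injective
      (fun z => (⟨(hf z).choose, (hf z).choose_spec.2⟩ : ↥R))
    intro z z' hzz
    have hval : ((z : ↥G'.verts) : V77) = ((z' : ↥G'.verts) : V77) := by
      rw [(hf z).choose_spec.1, (hf z').choose_spec.1]
      exact congrArg (fun t : ↥R => j2 t.1) hzz
    exact Subtype.ext (Subtype.ext hval)
  have cardnbr2 : ∀ (w : ↥G'.verts) (b : Fin 7), (w : V77) = j2 b →
      Nat.card (G'.coe.neighborSet w) ≤ Nat.card ↥L := by
    intro w b hw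
    have hf : ∀ z : ↥(G'.coe.neighborSet w), ∃ a, ((z : ↥G'.verts) : V77) = j1 a ∧ a ∈ L :=
      fun z => nbr2 w b hw z z.2
    apply Nat.card_le_card_of_injective
      (fun z => (⟨(hf z).choose, (hf z).choose_spec.2⟩ : ↥L))
    intro z z' hzz
    have hval : ((z : ↥G'.verts) : V77) = ((z' : ↥G'.verts) : V77) := by
      rw [(hf z).choose_spec.1, (hf z').choose_spec.1]
      exact congrArg (fun t : ↥L => j1 t.1) hzz
    exact Subtype.ext (Subtype.ext hval)
  obtain ⟨a1, ha1⟩ := h1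
  set w1 : ↥G'.verts := e.symm (Sum.inl 0) with hw1def
  set w2 : ↥G'.verts := e.symm (Sum.inl 1) with hw2def
  have hw1deg : Nat.card (G'.coe.neighborSet w1) = 7 := by
    rw [hdeg w1, hw1def]
    simp
  have hR7' : 7 ≤ Nat.card ↥R := by
    have h := cardnbr1 w1 a1 ha1
    rw [hw1deg] at h
    exact h
  have hRcard : Nat.card ↥R = 7 := le_antisymm hR7 hR7'
  have hLcard : Nat.card ↥L = 2 := by
    rw [hnine, hRcard] at hsplit
    omega
  have hw2 : ∃ a, (w2 : V77) = j1 a := by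
    rcases hj (w2 : V77) with h | ⟨b, hb⟩
    · exact h
    · exfalso
      have hw2deg : Nat.card (G'.coe.neighborSet w2) = 7 := by
        rw [hdeg w2, hw2def]; simp
      have h2 := cardnbr2 w2 b hb
      rw [hw2deg, hLcard] at h2
      omega
  obtain ⟨a2, ha2⟩ := hw2
  have hw1w2 : w1 ≠ w2 := by
    rw [hw1def, hw2def]
    intro h
    have := e.symm.injective h
    simp at this
  have hne12 : a1 ≠ a2 := by
    intro h
    exact hw1w2 (Subtype.ext (by rw [ha1, ha2, h]))
  have hsubL : ({a1, a2} : Set (Fin 7)) ⊆ L := by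
    intro x hx
    rcases hx with h | h
    · show j1 x ∈ G'.verts; rw [h, ← ha1]; exact w1.2
    · show j1 x ∈ G'.verts; rw [h, ← ha2]; exact w2.2
  have hLeq : ({a1, a2} : Set (Fin 7)) = L := by
    apply Set.eq_of_subset_of_ncard_le hsubL
    rw [← Nat.card_coe_set_eq, hLcard, Set.ncard_pair hne12]
  have hReq : R = Set.univ := by
    apply Set.eq_of_subset_of_ncard_le (Set.subset_univ R)
    rw [Set.ncard_univ, ← Nat.card_coe_set_eq, hRcard]
    simp [Nat.card_eq_fintype_card]
  have hcomp : ∀ a ∈ ({a1, a2} : Set (Fin 7)), ∀ b : Fin 7, G'.Adj (j1 a) (j2 b) := by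
    intro a ha b
    have hbv : j2 b ∈ G'.verts := by
      have : b ∈ R := by rw [hReq]; trivial
      exact this
    set y : ↥G'.verts := ⟨j2 b, hbv⟩ with hydef
    have hydeg : Nat.card (G'.coe.neighborSet y) = 2 := by
      have hle := cardnbr2 y b rfl
      rw [hdeg y] at hle ⊢
      rcases Bool.eq_false_or_eq_true (e y).isLeft with h | h
      · rw [h] at hle ⊢
        rw [if_pos rfl] at hle ⊢
        rw [hLcard] at hle
        omega
      · rw [h]
        simp
    by_contra hno
    set a' : Fin 7 := if a = a1 then a2 else a1 with ha'def
    have ha'mem : a' ∈ ({a1, a2} : Set (Fin 7)) := by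
      rw [ha'def]; split <;> simp
    have ha'v : j1 a' ∈ G'.verts := hsubL ha'mem
    have hsub : G'.coe.neighborSet y ⊆ {(⟨j1 a', ha'v⟩ : ↥G'.verts)} := by
      intro z hz
      obtain ⟨c, hc, hcL⟩ := nbr2 y b rfl z hz
      have hcmem : c ∈ ({a1, a2} : Set (Fin 7)) := by rw [hLeq]; exact hcL
      have hca : c ≠ a := by
        intro hca
        apply hno
        have h' : G'.Adj (j2 b) ((z : ↥G'.verts) : V77) := hz
        rw [hc, hca] at h'
        exact h'.symm
      have hc' : c = a' := pair_other ha hcmem hca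
      have hzval : ((z : ↥G'.verts) : V77) = j1 a' := by rw [hc, hc']
      exact Set.mem_singleton_iff.2 (Subtype.ext hzval)
    have hle1 : Nat.card (G'.coe.neighborSet y) ≤ 1 := by
      rw [Nat.card_coe_set_eq]
      calc (G'.coe.neighborSet y).ncard
          ≤ ({(⟨j1 a', ha'v⟩ : ↥G'.verts)} : Set _).ncard :=
            Set.ncard_le_ncard hsub (Set.finite_singleton _)
        _ = 1 := Set.ncard_singleton _
    omega
  have hverts : G'.verts = j1 '' {a1, a2} ∪ Set.range j2 := by
    ext x
    constructor
    · intro hx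
      rcases hj x with ⟨a, rfl⟩ | ⟨b, rfl⟩
      · exact Or.inl ⟨a, (by rw [hLeq]; exact hx : a ∈ ({a1, a2} : Set (Fin 7))), rfl⟩
      · exact Or.inr ⟨b, rfl⟩
    · rintro (⟨a, ha, rfl⟩ | ⟨b, rfl⟩)
      · exact hsubL ha
      · have : b ∈ R := by rw [hReq]; trivial
        exact this
  refine ⟨a1, a2, hne12, ?_⟩
  apply SimpleGraph.Subgraph.ext hverts
  funext x y
  apply propext
  rw [SimpleGraph.Subgraph.induce_adj]
  constructor
  · intro h
    refine ⟨?_, ?_, ?_⟩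
    · rw [← hverts]; exact G'.edge_vert h
    · rw [← hverts]; exact G'.edge_vert h.symm
    · simpa using G'.adj_sub h
  · rintro ⟨hxu, hyu, hadj7⟩
    have hadj7' : G7.Adj x y := by simpa using hadj7
    rcases hxu with ⟨a, ha, rfl⟩ | ⟨b, rfl⟩ <;> rcases hyu with ⟨a', ha', rfl⟩ | ⟨b', rfl⟩
    · exact absurd hadj7' (hnadj1 _ _)
    · exact hcomp a ha _
    · exact (hcomp a' ha' _).symm
    · exact absurd hadj7' (hnadj2 _ _)

lemma main_struct (G' : G7.Subgraph) (he : Nonempty (G'.coe ≃g H27)) :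
    ∃ b s, s.card = 2 ∧ G' = sb b s := by
  obtain ⟨e⟩ := he
  have hn1 : ∀ a b : Fin 7, ¬ G7.Adj (Sum.inl a) (Sum.inl b) := by simp
  have hn2 : ∀ a b : Fin 7, ¬ G7.Adj (Sum.inr a) (Sum.inr b) := by simp
  rcases cover_lr ((e.symm (Sum.inl 0) : ↥G'.verts) : V77) with ⟨a, ha⟩ | ⟨b, hb⟩
  · obtain ⟨a1, a2, h12, heq⟩ :=
      aux G' e inl_inj7 inr_inj7 inl_ne_inr7 cover_lr hn1 hn2 ⟨a, ha⟩
    refine ⟨true, {a1, a2}, Finset.card_pair h12, ?_⟩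
    rw [heq]
    unfold sb
    congr 1
    simp [bset]
  · obtain ⟨a1, a2, h12, heq⟩ :=
      aux G' e inr_inj7 inl_inj7 inr_ne_inl7 cover_rl hn2 hn1 ⟨b, hb⟩
    refine ⟨false, {a1, a2}, Finset.card_pair h12, ?_⟩
    rw [heq]
    unfold sb
    congr 1
    rw [Set.union_comm]
    simp [bset]

noncomputable def FF : Bool × {s : Finset (Fin 7) // s.card = 2} →
    {G' : G7.Subgraph // Nonempty (G'.coe ≃g H27)} :=
  fun p => ⟨sb p.1 p.2.1, ⟨sbIso p.1 p.2.1 p.2.2⟩⟩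

lemma FF_bij : Bijective FF := by
  constructor
  · rintro ⟨b, s, hs⟩ ⟨b', s', hs'⟩ h
    have h' : sb b s = sb b' s' := congrArg Subtype.val h
    obtain ⟨hb, hss⟩ := sb_injective b b' s s' hs hs' h'
    simp [Prod.ext_iff, Subtype.ext_iff, hb, hss]
  · rintro ⟨G', he⟩
    obtain ⟨b, s, hs, heq⟩ := main_struct G' he
    exact ⟨(b, ⟨s, hs⟩), Subtype.ext heq.symm⟩

lemma count42 : Nat.card {G' : G7.Subgraph // Nonempty (G'.coe ≃g H27)} = 42 := by
  rw [← Nat.card_eq_of_bijective FF FF_bij, Nat.card_eq_fintype_card,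
    Fintype.card_prod, Fintype.card_bool, Fintype.card_finset_len]
  simp
  decide


-- ---------- freeness ----------

lemma bool_flip {a b : Bool} (h : a = !b) : b = !a := by
  cases a <;> cases b <;> simp_all

lemma G7_adj_isLeft {a b : V77} (h : G7.Adj a b) : a.isLeft = !b.isLeft := by
  rcases a with a | a <;> rcases b with b | b <;> simp_all

lemma card_side (b : Bool) : Fintype.card {x : V77 // x.isLeft = b} = 7 := by
  cases b <;> decide

lemma G7_free : IsFFree (K2rpq 3 3 2) G7 := by
  rintro ⟨f, hinj, hmap⟩
  have adj_u_r : ∀ x : Fin 2, (K2rpq 3 3 2).Adj (Sum.inl 0) (Sum.inr (Sum.inl x)) :=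
    fun x => ⟨by simp, Or.inl trivial⟩
  have adj_v_r : (K2rpq 3 3 2).Adj (Sum.inl 1) (Sum.inr (Sum.inl 0)) :=
    ⟨by simp, Or.inl trivial⟩
  have adj_u_p : ∀ x : Fin 3, (K2rpq 3 3 2).Adj (Sum.inl 0) (Sum.inr (Sum.inr (Sum.inl x))) :=
    fun x => ⟨by simp, Or.inl rfl⟩
  have adj_v_q : ∀ x : Fin 3, (K2rpq 3 3 2).Adj (Sum.inl 1) (Sum.inr (Sum.inr (Sum.inr x))) :=
    fun x => ⟨by simp, Or.inl rfl⟩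
  set t : Bool := (f (Sum.inl 0)).isLeft with ht
  have hvt : (f (Sum.inl 1)).isLeft = t := by
    have h1 := G7_adj_isLeft (hmap (adj_u_r 0))
    have h2 := G7_adj_isLeft (hmap adj_v_r)
    rw [← ht] at h1
    rw [h2, ← h1]
  have key : ∀ x : Fin 2 ⊕ Fin 3 ⊕ Fin 3, (f (Sum.inr x)).isLeft = !t := by
    rintro (x | x | x)
    · exact bool_flip (G7_adj_isLeft (hmap (adj_u_r x)))
    · exact bool_flip (G7_adj_isLeft (hmap (adj_u_p x)))
    · have := bool_flip (G7_adj_isLeft (hmap (adj_v_q x)))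
      rwa [hvt] at this
  have ginj : Function.Injective
      (fun x : Fin 2 ⊕ Fin 3 ⊕ Fin 3 => (⟨f (Sum.inr x), key x⟩ : {y : V77 // y.isLeft = !t})) := by
    intro x y h
    have := hinj (congrArg Subtype.val h)
    exact Sum.inr_injective this
  have hcard := Fintype.card_le_of_injective _ ginj
  rw [card_side] at hcard
  simp at hcard

-- ---------- part 3 glue ----------

noncomputable def e14 : V77 ≃ Fin 14 := finSumFinEquiv.trans (finCongr (by norm_num))

noncomputable def G14 : SimpleGraph (Fin 14) := G7.map e14.toEmbedding

noncomputable def psi14 : G7 ≃g G14 where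
  toEquiv := e14
  map_rel_iff' := by
    intro a b
    exact SimpleGraph.map_adj_apply

lemma isFFree_of_iso {α β γ : Type*} {F : SimpleGraph α} {G : SimpleGraph β}
    {G2 : SimpleGraph γ} (ψ : G ≃g G2) (h : IsFFree F G) : IsFFree F G2 := by
  rintro ⟨f, hinj, hmap⟩
  refine h ⟨fun a => ψ.symm (f a), ψ.symm.injective.comp hinj, fun a b hab => ?_⟩
  exact ψ.symm.map_rel_iff.mpr (hmap hab)

lemma copyCount_le14 (G : SimpleGraph (Fin 14)) :
    _root_.copyCount H27 G ≤ Nat.card (Set (Fin 14) × (Fin 14 → Fin 14 → Prop)) := by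
  apply Nat.card_le_card_of_injective
    (fun A : {G' : G.Subgraph // Nonempty (G'.coe ≃g H27)} => ((A.1.verts, A.1.Adj) :
      Set (Fin 14) × (Fin 14 → Fin 14 → Prop)))
  intro A B h
  exact Subtype.ext (SimpleGraph.Subgraph.ext (congrArg Prod.fst h) (congrArg Prod.snd h))

end Stmt16Aux

theorem stmt16 :
    IsFFree (K2rpq 3 3 2) (completeBipartiteGraph (Fin 7) (Fin 7)) ∧
    _root_.copyCount (completeBipartiteGraph (Fin 2) (Fin 7))
        (completeBipartiteGraph (Fin 7) (Fin 7)) = 42 ∧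
    42 ≤ exNum 14 (completeBipartiteGraph (Fin 2) (Fin 7)) (K2rpq 3 3 2) := by
  refine ⟨G7_free, count42, ?_⟩
  have hmem : 42 ∈ {k | ∃ G : SimpleGraph (Fin 14),
      IsFFree (K2rpq 3 3 2) G ∧ _root_.copyCount H27 G = k} := by
    refine ⟨G14, isFFree_of_iso psi14 G7_free, ?_⟩
    rw [← copyCount_iso H27 psi14]
    exact count42
  have hbdd : BddAbove {k | ∃ G : SimpleGraph (Fin 14),
      IsFFree (K2rpq 3 3 2) G ∧ _root_.copyCount H27 G = k} := by
    refine ⟨Nat.card (Set (Fin 14) × (Fin 14 → Fin 14 → Prop)), ?_⟩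
    rintro k ⟨G, _, rfl⟩
    exact copyCount_le14 G
  exact le_csSup hbdd hmem
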